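/- Let $a_1 \geq a_2 \geq \cdots \geq a_k > 0$ be real numbers and $q > 0$. Writing $s_p = \sum_{i=1}^k a_i^p$, one has $a_k^{1+q}(s_1 s_3 - s_2^2) + (s_2 s_{3+q} - s_3 s_{2+q}) - a_k(s_1 s_{3+q} - s_2 s_{2+q}) \geq 0$, with equality if and only if the vector $(a_1,\ldots,a_k)$ takes at most two distinct values. -/

import Mathlib

open Finset

section aux
open Real

private lemma slope_pos' {q m x y : ℝ} (hq : 0 < q) (hm : 0 < m) (hmy : m < y) (hyx : y < x) :
    0 < (y - m) * (x ^ (1+q) - m ^ (1+q)) - (x - m) * (y ^ (1+q) - m ^ (1+q)) := by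
  have hconv : StrictConvexOn ℝ (Set.Ici 0) fun t : ℝ => t ^ (1+q) :=
    strictConvexOn_rpow (by linarith)
  have hxm : (0:ℝ) < x - m := by linarith
  set A := (x - y)/(x - m) with hA
  set B := (y - m)/(x - m) with hB
  have hA0 : 0 < A := div_pos (by linarith) hxm
  have hB0 : 0 < B := div_pos (by linarith) hxm
  have hAB : A + B = 1 := by
    rw [hA, hB, ← add_div, div_eq_one_iff_eq hxm.ne']; ring
  have hy : A • m + B • x = y := by
    simp only [smul_eq_mul, hA, hB]
    field_simp
    ring
  have key := hconv.2 (Set.mem_Ici.2 hm.le) (Set.mem_Ici.2 (by linarith : (0:ℝ) ≤ x))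
    (by intro h; linarith : m ≠ x) hA0 hB0 hAB
  rw [hy] at key
  simp only [smul_eq_mul, hA, hB] at key
  have key2 : (x - m) * (y ^ (1+q)) < (x - y) * m ^ (1+q) + (y - m) * x ^ (1+q) := by
    have h2 := mul_lt_mul_of_pos_left key hxm
    calc (x - m) * y ^ (1+q)
        < (x-m) * ((x - y)/(x - m) * m ^ (1+q) + (y - m)/(x - m) * x ^ (1+q)) := h2
      _ = (x - y) * m ^ (1+q) + (y - m) * x ^ (1+q) := by field_simp
  linarith [key2]

private lemma G_pos' {q m x y : ℝ} (hq : 0 < q) (hm : 0 < m) (hmy : m < y) (hyx : y < x) :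
    0 < (x - y) * ((y - m) * (x ^ (1+q) - m ^ (1+q)) - (x - m) * (y ^ (1+q) - m ^ (1+q))) :=
  mul_pos (by linarith) (slope_pos' hq hm hmy hyx)

private lemma G_nonneg_aux' {q m x y : ℝ} (hq : 0 < q) (hm : 0 < m) (hmy : m ≤ y) (hyx : y ≤ x) :
    0 ≤ (x - y) * ((y - m) * (x ^ (1+q) - m ^ (1+q)) - (x - m) * (y ^ (1+q) - m ^ (1+q))) := by
  rcases eq_or_lt_of_le hmy with h | h
  · subst h
    exact le_of_eq (by ring)
  rcases eq_or_lt_of_le hyx with h2 | h2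
  · subst h2
    exact le_of_eq (by ring)
  · exact (G_pos' hq hm h h2).le

private lemma G_nonneg' {q m x y : ℝ} (hq : 0 < q) (hm : 0 < m) (hmx : m ≤ x) (hmy : m ≤ y) :
    0 ≤ (x - y) * ((y - m) * (x ^ (1+q) - m ^ (1+q)) - (x - m) * (y ^ (1+q) - m ^ (1+q))) := by
  rcases le_total y x with h | h
  · exact G_nonneg_aux' hq hm hmy h
  · have := G_nonneg_aux' hq hm hmx h
    calc (0:ℝ) ≤ (y - x) * ((x - m) * (y ^ (1+q) - m ^ (1+q)) - (y - m) * (x ^ (1+q) - m ^ (1+q))) := this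
      _ = _ := by ring

private lemma point_id' {q m x y : ℝ} (hm : 0 < m) (hx : 0 < x) (hy : 0 < y) :
    x * y * ((x - y) * ((y - m) * (x ^ (1+q) - m ^ (1+q)) - (x - m) * (y ^ (1+q) - m ^ (1+q))))
    = (m^(1+q) * (x ^ (1:ℝ) * y^(3:ℝ) - x^(2:ℝ) * y^(2:ℝ)) + (x^(2:ℝ) * y^(3+q) - x^(3:ℝ) * y^(2+q))
        - m * (x ^ (1:ℝ) * y^(3+q) - x^(2:ℝ) * y^(2+q)))
    + (m^(1+q) * (y ^ (1:ℝ) * x^(3:ℝ) - y^(2:ℝ) * x^(2:ℝ)) + (y^(2:ℝ) * x^(3+q) - y^(3:ℝ) * x^(2+q))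
        - m * (y ^ (1:ℝ) * x^(3+q) - y^(2:ℝ) * x^(2+q))) := by
  have e : ∀ z : ℝ, 0 < z → z ^ (1:ℝ) = z ∧ z ^ (2:ℝ) = z * z ∧ z ^ (3:ℝ) = z * z * z
      ∧ z ^ (1+q) = z * z^q ∧ z ^ (2+q) = z * z * z^q ∧ z ^ (3+q) = z * z * z * z^q := by
    intro z hz
    have h2 : z ^ (2:ℝ) = z * z := by
      rw [show (2:ℝ) = 1+1 by norm_num, rpow_add hz, rpow_one]
    have h3 : z ^ (3:ℝ) = z * z * z := by
      rw [show (3:ℝ) = 1+1+1 by norm_num, rpow_add hz, rpow_add hz, rpow_one]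
    exact ⟨rpow_one z, h2, h3, by rw [rpow_add hz, rpow_one], by rw [rpow_add hz, h2],
      by rw [rpow_add hz, h3]⟩
  obtain ⟨hx1, hx2, hx3, hx1q, hx2q, hx3q⟩ := e x hx
  obtain ⟨hy1, hy2, hy3, hy1q, hy2q, hy3q⟩ := e y hy
  obtain ⟨hm1, hm2, hm3, hm1q, hm2q, hm3q⟩ := e m hm
  rw [hx1, hx2, hx3, hx1q, hx2q, hx3q, hy1, hy2, hy3, hy1q, hy2q, hy3q, hm1q]
  ring

end aux

theorem stmt_0 (k : ℕ) (hk : 0 < k) (a : Fin k → ℝ) (q : ℝ) (hq : 0 < q)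
    (hpos : ∀ i, 0 < a i) (hmono : ∀ i j : Fin k, i ≤ j → a j ≤ a i) :
    let s : ℝ → ℝ := fun p => ∑ i, a i ^ p
    let ak : ℝ := a ⟨k - 1, by omega⟩
    0 ≤ ak ^ (1 + q) * (s 1 * s 3 - (s 2) ^ 2) + (s 2 * s (3 + q) - s 3 * s (2 + q))
        - ak * (s 1 * s (3 + q) - s 2 * s (2 + q)) ∧
    (ak ^ (1 + q) * (s 1 * s 3 - (s 2) ^ 2) + (s 2 * s (3 + q) - s 3 * s (2 + q))
        - ak * (s 1 * s (3 + q) - s 2 * s (2 + q)) = 0 ↔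
      (Finset.image a Finset.univ).card ≤ 2) := by
  intro s ak
  have hs : ∀ p, s p = ∑ i, a i ^ p := fun _ => rfl
  have hak : ak = a ⟨k - 1, by omega⟩ := rfl
  have hm : 0 < ak := hpos _
  have hmin : ∀ i, ak ≤ a i := by
    intro i
    apply hmono
    rw [Fin.le_def]
    show (i : ℕ) ≤ k - 1
    have := i.isLt
    omega
  set F : Fin k → Fin k → ℝ := fun i j =>
    (a i * a j) * ((a i - a j) * ((a j - ak) * (a i ^ (1+q) - ak ^ (1+q))
      - (a i - ak) * (a j ^ (1+q) - ak ^ (1+q)))) with hF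
  have hFnonneg : ∀ i j, 0 ≤ F i j := fun i j =>
    mul_nonneg (mul_pos (hpos i) (hpos j)).le (G_nonneg' hq hm (hmin i) (hmin j))
  set T : Fin k → Fin k → ℝ := fun i j =>
    ak^(1+q) * (a i ^ (1:ℝ) * a j ^ (3:ℝ) - a i ^ (2:ℝ) * a j ^ (2:ℝ))
      + (a i ^ (2:ℝ) * a j ^ (3+q) - a i ^ (3:ℝ) * a j ^ (2+q))
      - ak * (a i ^ (1:ℝ) * a j ^ (3+q) - a i ^ (2:ℝ) * a j ^ (2+q)) with hT
  have hsum : ak ^ (1 + q) * (s 1 * s 3 - (s 2) ^ 2) + (s 2 * s (3 + q) - s 3 * s (2 + q))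
      - ak * (s 1 * s (3 + q) - s 2 * s (2 + q)) = ∑ i, ∑ j, T i j := by
    simp only [hT, hs, sq, Finset.sum_mul_sum, Finset.mul_sum, ← Finset.sum_sub_distrib,
      ← Finset.sum_add_distrib]
    conv_rhs => rw [Finset.sum_comm]
    refine Finset.sum_congr rfl fun j _ => ?_
    simp only [Finset.sum_mul, Finset.mul_sum, ← Finset.sum_sub_distrib,
      ← Finset.sum_add_distrib]
  have hFT : ∀ i j, F i j = T i j + T j i := by
    intro i j
    simp only [hF, hT]
    exact point_id' hm (hpos i) (hpos j)
  have hFsum : ∑ i, ∑ j, F i j = 2 * ∑ i, ∑ j, T i j := by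
    calc ∑ i, ∑ j, F i j = ∑ i, ∑ j, (T i j + T j i) := by
          exact Finset.sum_congr rfl fun i _ => Finset.sum_congr rfl fun j _ => hFT i j
      _ = (∑ i, ∑ j, T i j) + ∑ i, ∑ j, T j i := by
          simp [Finset.sum_add_distrib]
      _ = (∑ i, ∑ j, T i j) + ∑ j, ∑ i, T j i := by rw [Finset.sum_comm]
      _ = 2 * ∑ i, ∑ j, T i j := by ring
  have hFges : 0 ≤ ∑ i, ∑ j, F i j :=
    Finset.sum_nonneg fun i _ => Finset.sum_nonneg fun j _ => hFnonneg i j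
  constructor
  · rw [hsum]; linarith [hFsum]
  rw [hsum]
  constructor
  · -- sum zero → card ≤ 2
    intro hzero
    have hF0 : ∀ i j, F i j = 0 := by
      have h0 : ∑ i, ∑ j, F i j = 0 := by rw [hFsum, hzero]; ring
      intro i j
      have hinner : ∀ i ∈ Finset.univ, ∑ j, F i j = 0 :=
        (Finset.sum_eq_zero_iff_of_nonneg fun i _ =>
          Finset.sum_nonneg fun j _ => hFnonneg i j).mp h0
      exact (Finset.sum_eq_zero_iff_of_nonneg fun j _ => hFnonneg i j).mp
        (hinner i (Finset.mem_univ i)) j (Finset.mem_univ j)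
    by_contra hcard
    push_neg at hcard
    have hmem : ak ∈ Finset.image a Finset.univ :=
      Finset.mem_image.2 ⟨⟨k - 1, by omega⟩, Finset.mem_univ _, hak.symm⟩
    have h1 : 1 < ((Finset.image a Finset.univ).erase ak).card := by
      rw [Finset.card_erase_of_mem hmem]
      omega
    obtain ⟨u, hu, v, hv, huv⟩ := Finset.one_lt_card.mp h1
    obtain ⟨hune, huim⟩ := Finset.mem_erase.mp hu
    obtain ⟨hvne, hvim⟩ := Finset.mem_erase.mp hv
    obtain ⟨iu, -, hiu⟩ := Finset.mem_image.mp huim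
    obtain ⟨iv, -, hiv⟩ := Finset.mem_image.mp hvim
    have hu' : ak < a iu := lt_of_le_of_ne (hmin iu) (by rw [hiu]; exact fun h => hune h.symm)
    have hv' : ak < a iv := lt_of_le_of_ne (hmin iv) (by rw [hiv]; exact fun h => hvne h.symm)
    have huvne : a iu ≠ a iv := by rw [hiu, hiv]; exact huv
    rcases lt_or_gt_of_ne huvne with hlt | hgt
    · have : 0 < F iv iu :=
        mul_pos (mul_pos (hpos iv) (hpos iu)) (G_pos' hq hm hu' hlt)
      linarith [hF0 iv iu]
    · have : 0 < F iu iv :=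
        mul_pos (mul_pos (hpos iu) (hpos iv)) (G_pos' hq hm hv' hgt)
      linarith [hF0 iu iv]
  · -- card ≤ 2 → sum zero
    intro hcard
    have hF0 : ∀ i j, F i j = 0 := by
      intro i j
      have htri : a i = a j ∨ a i = ak ∨ a j = ak := by
        by_contra hc
        push_neg at hc
        obtain ⟨h1, h2, h3⟩ := hc
        have hsub : ({a i, a j, ak} : Finset ℝ) ⊆ Finset.image a Finset.univ := by
          intro x hx
          simp only [Finset.mem_insert, Finset.mem_singleton] at hx
          rcases hx with rfl | rfl | rfl
          · exact Finset.mem_image.2 ⟨i, Finset.mem_univ _, rfl⟩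
          · exact Finset.mem_image.2 ⟨j, Finset.mem_univ _, rfl⟩
          · exact Finset.mem_image.2 ⟨⟨k - 1, by omega⟩, Finset.mem_univ _, hak.symm⟩
        have h3card : ({a i, a j, ak} : Finset ℝ).card = 3 :=
          Finset.card_eq_three.mpr ⟨a i, a j, ak, h1, h2, h3, rfl⟩
        have := Finset.card_le_card hsub
        omega
      rcases htri with h | h | h
      · simp only [hF]; rw [h]; ring
      · simp only [hF]; rw [h]; ring
      · simp only [hF]; rw [h]; ring
    have h0 : ∑ i, ∑ j, F i j = 0 :=
      Finset.sum_eq_zero fun i _ => Finset.sum_eq_zero fun j _ => hF0 i j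
    linarith [hFsum, h0]
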